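/- In the capacitated b-matching setting, let M be a welfare-maximizing allocation and M^{-1} a welfare-maximizing allocation among those whose row 1 is identically zero. Then every cycle in the difference graph of M and M^{-1} has value exactly zero: for any t ≥ 1, distinct agents i_1, …, i_t and distinct goods j_1, …, j_t such that M i_s j_s > M^{-1} i_s j_s and M^{-1} i_{s+1} j_s > M i_{s+1} j_s for all s (indices taken modulo t), it holds that Σ_s (w i_s j_s − w i_{s+1} j_s) = 0. -/

import Mathlib

/-- An allocation in the capacitated `b`-matching setting: agent `i` gets at
most `c i` units in total and at most `q j` units of good `j` are allocated. -/
def IsAlloc {n m : ℕ} (c : Fin n → ℕ) (q : Fin m → ℕ)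
    (a : Fin n → Fin m → ℕ) : Prop :=
  (∀ i, ∑ j, a i j ≤ c i) ∧ (∀ j, ∑ i, a i j ≤ q j)

/-- The value of an allocation: `∑_{i,j} a i j · w i j`. -/
def allocVal {n m : ℕ} (w : Fin n → Fin m → ℝ) (a : Fin n → Fin m → ℕ) : ℝ :=
  ∑ i, ∑ j, (a i j : ℝ) * w i j

/-- If `M` maximizes welfare and `M₁` maximizes welfare among allocations giving
nothing to agent `i₀`, then every cycle in the difference graph of `M` and `M₁`
has value exactly zero. The cycle alternates agents `ag s` and goods `gd s`
(indices modulo `t`), with arc `ag s → gd s` when `M (ag s) (gd s) > M₁ (ag s) (gd s)`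
and arc `gd s → ag (s+1)` when `M₁ (ag (s+1)) (gd s) > M (ag (s+1)) (gd s)`. -/
theorem difference_graph_cycle_value_zero {n m : ℕ}
    (c : Fin n → ℕ) (q : Fin m → ℕ) (w : Fin n → Fin m → ℝ)
    (hw : ∀ i j, 0 ≤ w i j) (i₀ : Fin n)
    (M : Fin n → Fin m → ℕ) (hM : IsAlloc c q M)
    (hMmax : ∀ a, IsAlloc c q a → allocVal w a ≤ allocVal w M)
    (M₁ : Fin n → Fin m → ℕ) (hM₁ : IsAlloc c q M₁)
    (hM₁row : ∀ j, M₁ i₀ j = 0)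
    (hM₁max : ∀ a, IsAlloc c q a → (∀ j, a i₀ j = 0) →
      allocVal w a ≤ allocVal w M₁)
    (t : ℕ) [NeZero t]
    (ag : Fin t → Fin n) (hag : Function.Injective ag)
    (gd : Fin t → Fin m) (hgd : Function.Injective gd)
    (harc₁ : ∀ s : Fin t, M₁ (ag s) (gd s) < M (ag s) (gd s))
    (harc₂ : ∀ s : Fin t, M (ag (s + 1)) (gd s) < M₁ (ag (s + 1)) (gd s)) :
    ∑ s : Fin t, (w (ag s) (gd s) - w (ag (s + 1)) (gd s)) = 0 := by
  classical
  -- P: one unit added along arcs gd s → ag (s+1); N: one unit along ag s → gd s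
  set P : Fin n → Fin m → ℕ := fun i j => ∑ s, if ag (s+1) = i ∧ gd s = j then 1 else 0
    with hPdef
  set N : Fin n → Fin m → ℕ := fun i j => ∑ s, if ag s = i ∧ gd s = j then 1 else 0
    with hNdef
  -- generic counting lemmas
  have count_eval : ∀ (f : Fin t → Fin n) (i : Fin n) (j : Fin m),
      (∑ s, if f s = i ∧ gd s = j then 1 else 0) =
        if ∃ s, f s = i ∧ gd s = j then (1 : ℕ) else 0 := by
    intro f i j
    split
    · rename_i h
      obtain ⟨s0, h1, h2⟩ := h
      rw [Finset.sum_eq_single s0]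
      · simp [h1, h2]
      · intro s _ hs
        have : gd s ≠ j := fun hj => hs (hgd (hj.trans h2.symm))
        simp [this]
      · simp
    · rename_i h
      push_neg at h
      apply Finset.sum_eq_zero
      intro s _
      rcases Decidable.em (f s = i) with h1 | h1
      · have := h s h1; simp [h1, this]
      · simp [h1]
  have row_sum : ∀ (f : Fin t → Fin n) (i : Fin n),
      (∑ j, ∑ s, if f s = i ∧ gd s = j then 1 else 0) =
        ∑ s, if f s = i then 1 else 0 := by
    intro f i
    rw [Finset.sum_comm]
    refine Finset.sum_congr rfl fun s _ => ?_
    by_cases hA : f s = i <;> simp [hA, Finset.sum_ite_eq]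
  have col_sum : ∀ (f : Fin t → Fin n) (j : Fin m),
      (∑ i, ∑ s, if f s = i ∧ gd s = j then 1 else 0) =
        ∑ s, if gd s = j then 1 else 0 := by
    intro f j
    rw [Finset.sum_comm]
    refine Finset.sum_congr rfl fun s _ => ?_
    by_cases hB : gd s = j <;> simp [hB, Finset.sum_ite_eq]
  have val_sum : ∀ (f : Fin t → Fin n),
      (∑ i, ∑ j, ((∑ s, if f s = i ∧ gd s = j then 1 else 0 : ℕ) : ℝ) * w i j) =
        ∑ s, w (f s) (gd s) := by
    intro f
    have step : ∀ i j, ((∑ s, if f s = i ∧ gd s = j then 1 else 0 : ℕ) : ℝ) * w i j =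
        ∑ s, if f s = i ∧ gd s = j then w i j else 0 := by
      intro i j
      push_cast
      rw [Finset.sum_mul]
      refine Finset.sum_congr rfl fun s _ => ?_
      split <;> simp
    simp_rw [step]
    have swap : (∑ i, ∑ j, ∑ s, if f s = i ∧ gd s = j then w i j else 0)
        = ∑ s, ∑ i, ∑ j, if f s = i ∧ gd s = j then w i j else 0 := by
      calc (∑ i, ∑ j, ∑ s, if f s = i ∧ gd s = j then w i j else 0)
          = ∑ i, ∑ s, ∑ j, if f s = i ∧ gd s = j then w i j else 0 :=
            Finset.sum_congr rfl (fun i _ => Finset.sum_comm)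
        _ = ∑ s, ∑ i, ∑ j, if f s = i ∧ gd s = j then w i j else 0 :=
            Finset.sum_comm
    rw [swap]
    refine Finset.sum_congr rfl fun s _ => ?_
    simp [ite_and, Finset.sum_ite_eq]
  -- per-entry facts
  have hNM : ∀ i j, N i j ≤ M i j := by
    intro i j
    simp only [hNdef]
    rw [count_eval ag i j]
    split
    · rename_i h
      obtain ⟨s0, h1, h2⟩ := h
      have := harc₁ s0
      subst h1; subst h2
      omega
    · exact Nat.zero_le _
  have hPM₁ : ∀ i j, P i j ≤ M₁ i j := by
    intro i j
    simp only [hPdef]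
    rw [count_eval (fun s => ag (s+1)) i j]
    split
    · rename_i h
      obtain ⟨s0, h1, h2⟩ := h
      have := harc₂ s0
      subst h1; subst h2
      omega
    · exact Nat.zero_le _
  have hPi₀ : ∀ j, P i₀ j = 0 := by
    intro j
    simp only [hPdef]
    rw [count_eval (fun s => ag (s+1)) i₀ j]
    split
    · rename_i h
      obtain ⟨s0, h1, h2⟩ := h
      have := harc₂ s0
      rw [h1, hM₁row] at this
      omega
    · rfl
  have hNi₀ : ∀ j, N i₀ j = 0 := by
    intro j
    simp only [hNdef]
    rw [count_eval ag i₀ j]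
    split
    · rename_i h
      obtain ⟨s0, h1, h2⟩ := h
      have hs : (s0 - 1) + 1 = s0 := by
        rw [sub_add_cancel]
      have := harc₂ (s0 - 1)
      rw [hs, h1, hM₁row] at this
      omega
    · rfl
  -- equal row and column sums of P and N
  have hrow : ∀ i, ∑ j, P i j = ∑ j, N i j := by
    intro i
    simp only [hPdef, hNdef]
    rw [row_sum (fun s => ag (s+1)) i, row_sum ag i]
    exact Fintype.sum_equiv (Equiv.addRight (1 : Fin t)) _ _ (fun s => by simp; rfl)
  have hcol : ∀ j, ∑ i, P i j = ∑ i, N i j := by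
    intro j
    simp only [hPdef, hNdef]
    rw [col_sum (fun s => ag (s+1)) j, col_sum ag j]
  -- the two modified allocations
  set M' : Fin n → Fin m → ℕ := fun i j => M i j + P i j - N i j with hM'def
  set M₁' : Fin n → Fin m → ℕ := fun i j => M₁ i j + N i j - P i j with hM₁'def
  have hM'alloc : IsAlloc c q M' := by
    constructor
    · intro i
      have h1 : ∑ j, (M' i j + N i j) = ∑ j, (M i j + P i j) := by
        refine Finset.sum_congr rfl fun j _ => ?_
        have := hNM i j
        simp only [hM'def]
        omega
      rw [Finset.sum_add_distrib, Finset.sum_add_distrib] at h1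
      have h2 := hrow i
      have h3 := hM.1 i
      omega
    · intro j
      have h1 : ∑ i, (M' i j + N i j) = ∑ i, (M i j + P i j) := by
        refine Finset.sum_congr rfl fun i _ => ?_
        have := hNM i j
        simp only [hM'def]
        omega
      rw [Finset.sum_add_distrib, Finset.sum_add_distrib] at h1
      have h2 := hcol j
      have h3 := hM.2 j
      omega
  have hM₁'alloc : IsAlloc c q M₁' := by
    constructor
    · intro i
      have h1 : ∑ j, (M₁' i j + P i j) = ∑ j, (M₁ i j + N i j) := by
        refine Finset.sum_congr rfl fun j _ => ?_
        have := hPM₁ i j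
        simp only [hM₁'def]
        omega
      rw [Finset.sum_add_distrib, Finset.sum_add_distrib] at h1
      have h2 := hrow i
      have h3 := hM₁.1 i
      omega
    · intro j
      have h1 : ∑ i, (M₁' i j + P i j) = ∑ i, (M₁ i j + N i j) := by
        refine Finset.sum_congr rfl fun i _ => ?_
        have := hPM₁ i j
        simp only [hM₁'def]
        omega
      rw [Finset.sum_add_distrib, Finset.sum_add_distrib] at h1
      have h2 := hcol j
      have h3 := hM₁.2 j
      omega
  have hM₁'row : ∀ j, M₁' i₀ j = 0 := by
    intro j
    simp only [hM₁'def]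
    rw [hM₁row, hPi₀, hNi₀]
  -- values of the modified allocations
  have castM' : ∀ i j, ((M' i j : ℕ) : ℝ) = (M i j : ℝ) + (P i j : ℝ) - (N i j : ℝ) := by
    intro i j
    simp only [hM'def]
    have h1 : N i j ≤ M i j + P i j := le_trans (hNM i j) (Nat.le_add_right _ _)
    push_cast [Nat.cast_sub h1]
    ring
  have castM₁' : ∀ i j, ((M₁' i j : ℕ) : ℝ) = (M₁ i j : ℝ) + (N i j : ℝ) - (P i j : ℝ) := by
    intro i j
    simp only [hM₁'def]
    have h1 : P i j ≤ M₁ i j + N i j := le_trans (hPM₁ i j) (Nat.le_add_right _ _)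
    push_cast [Nat.cast_sub h1]
    ring
  have hPval : (∑ i, ∑ j, (P i j : ℝ) * w i j) = ∑ s, w (ag (s+1)) (gd s) :=
    val_sum (fun s => ag (s+1))
  have hNval : (∑ i, ∑ j, (N i j : ℝ) * w i j) = ∑ s, w (ag s) (gd s) :=
    val_sum ag
  have hM'val : allocVal w M' =
      allocVal w M + (∑ s, w (ag (s+1)) (gd s)) - ∑ s, w (ag s) (gd s) := by
    unfold allocVal
    rw [← hPval, ← hNval]
    rw [← Finset.sum_add_distrib, ← Finset.sum_sub_distrib]
    refine Finset.sum_congr rfl fun i _ => ?_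
    rw [← Finset.sum_add_distrib, ← Finset.sum_sub_distrib]
    refine Finset.sum_congr rfl fun j _ => ?_
    rw [castM' i j]; ring
  have hM₁'val : allocVal w M₁' =
      allocVal w M₁ + (∑ s, w (ag s) (gd s)) - ∑ s, w (ag (s+1)) (gd s) := by
    unfold allocVal
    rw [← hNval, ← hPval]
    rw [← Finset.sum_add_distrib, ← Finset.sum_sub_distrib]
    refine Finset.sum_congr rfl fun i _ => ?_
    rw [← Finset.sum_add_distrib, ← Finset.sum_sub_distrib]
    refine Finset.sum_congr rfl fun j _ => ?_
    rw [castM₁' i j]; ring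
  have h1 := hMmax M' hM'alloc
  have h2 := hM₁max M₁' hM₁'alloc hM₁'row
  rw [hM'val] at h1
  rw [hM₁'val] at h2
  rw [Finset.sum_sub_distrib]
  linarith
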